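/- Let ℓ∞⁺ denote the set of bounded sequences s : ℕ → ℝ≥0 with norm ‖s‖ := sup_{i∈ℕ} s i, and let Γ : ℓ∞⁺ → ℓ∞⁺ be homogeneous of degree one. Suppose there is a nonincreasing sequence b : ℕ → ℝ≥0 with b(k) → 0 as k → ∞ such that ‖Γᵏ(s)‖ ≤ b(k)·‖s‖ for all s ∈ ℓ∞⁺ and k ∈ ℕ. Then there exist M > 0 and a ∈ (0,1) such that ‖Γᵏ(s)‖ ≤ M aᵏ ‖s‖ for all s ∈ ℓ∞⁺ and k ∈ ℕ; i.e., uniform global asymptotic stability of the discrete-time system induced by Γ implies its uniform global exponential stability. -/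

import Mathlib

open scoped NNReal
open Filter

/-- A nonnegative sequence belongs to `ℓ∞⁺` iff it is bounded. -/
def InLinf (s : ℕ → ℝ≥0) : Prop := BddAbove (Set.range s)

/-- The sup-norm `‖s‖ = ⨆ i, s i` on `ℓ∞⁺`. -/
noncomputable def lnorm (s : ℕ → ℝ≥0) : ℝ≥0 := ⨆ i, s i

/-- For a homogeneous-of-degree-one operator `Γ : ℓ∞⁺ → ℓ∞⁺`, uniform global
asymptotic stability (a nonincreasing bound `b k → 0` with `‖Γᵏ(s)‖ ≤ b k · ‖s‖`) implies
uniform global exponential stability (`‖Γᵏ(s)‖ ≤ M aᵏ ‖s‖` with `M > 0`, `a ∈ (0,1)`). -/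
theorem UGAS_implies_UGES
    (Γ : (ℕ → ℝ≥0) → ℕ → ℝ≥0)
    (hmap : ∀ s, InLinf s → InLinf (Γ s))
    (hhom : ∀ (c : ℝ≥0) (s : ℕ → ℝ≥0), InLinf s → ∀ i, Γ (fun j => c * s j) i = c * Γ s i)
    (b : ℕ → ℝ≥0) (hbanti : Antitone b) (hbto : Tendsto b atTop (nhds 0))
    (hUGAS : ∀ s, InLinf s → ∀ k : ℕ, lnorm (Γ^[k] s) ≤ b k * lnorm s) :
    ∃ M : ℝ≥0, 0 < M ∧ ∃ a : ℝ≥0, 0 < a ∧ a < 1 ∧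
      ∀ s, InLinf s → ∀ k : ℕ, lnorm (Γ^[k] s) ≤ M * a ^ k * lnorm s := by
  -- choose K ≥ 1 with b K ≤ 1/2
  obtain ⟨N, hN⟩ := (hbto.eventually (gt_mem_nhds (by norm_num : (0:ℝ≥0) < 2⁻¹))).exists
  set K : ℕ := N + 1 with hKdef
  have hKpos : 0 < K := Nat.succ_pos _
  have hK : b K ≤ 2⁻¹ := le_of_lt (lt_of_le_of_lt (hbanti (Nat.le_succ N)) hN)
  -- the decay rate
  set a : ℝ≥0 := (2⁻¹ : ℝ≥0) ^ ((K : ℝ)⁻¹) with hadef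
  have ha0 : 0 < a := NNReal.rpow_pos (by norm_num)
  have ha1 : a < 1 := NNReal.rpow_lt_one (by exact_mod_cast (by norm_num : ((2:ℝ≥0)⁻¹ : ℝ) < 1)) (by positivity)
  refine ⟨2 * b 0 + 2, by positivity, a, ha0, ha1, ?_⟩
  intro s hs k
  -- iterates stay in ℓ∞⁺
  have hiter : ∀ n : ℕ, InLinf (Γ^[n] s) := by
    intro n
    induction n with
    | zero => exact hs
    | succ n ih => rw [Function.iterate_succ_apply']; exact hmap _ ih
  -- geometric decay along multiples of K
  have hblock : ∀ m : ℕ, lnorm (Γ^[K * m] s) ≤ (2⁻¹ : ℝ≥0) ^ m * lnorm s := by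
    intro m
    induction m with
    | zero => simp
    | succ m ih =>
        have : Γ^[K * (m + 1)] s = Γ^[K] (Γ^[K * m] s) := by
          rw [Nat.mul_succ, Nat.add_comm, Function.iterate_add_apply]
        rw [this]
        calc lnorm (Γ^[K] (Γ^[K * m] s)) ≤ b K * lnorm (Γ^[K * m] s) :=
              hUGAS _ (hiter _) K
          _ ≤ 2⁻¹ * ((2⁻¹ : ℝ≥0) ^ m * lnorm s) := by
              exact mul_le_mul hK ih zero_le zero_le
          _ = (2⁻¹ : ℝ≥0) ^ (m + 1) * lnorm s := by ring
  -- decompose k = K * m + r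
  set m : ℕ := k / K with hm
  set r : ℕ := k % K with hr
  have hkdecomp : K * m + r = k := Nat.div_add_mod k K
  have h1 : lnorm (Γ^[k] s) ≤ b 0 * ((2⁻¹ : ℝ≥0) ^ m * lnorm s) := by
    have : Γ^[k] s = Γ^[r] (Γ^[K * m] s) := by
      rw [← hkdecomp, Nat.add_comm, Function.iterate_add_apply]
    rw [this]
    calc lnorm (Γ^[r] (Γ^[K * m] s)) ≤ b r * lnorm (Γ^[K * m] s) := hUGAS _ (hiter _) r
      _ ≤ b 0 * ((2⁻¹ : ℝ≥0) ^ m * lnorm s) :=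
          mul_le_mul (hbanti (Nat.zero_le r)) (hblock m) zero_le zero_le
  -- relate (1/2)^m to a^k
  have hpow : (2⁻¹ : ℝ≥0) ^ m ≤ 2 * a ^ k := by
    have hak : a ^ k = (2⁻¹ : ℝ≥0) ^ ((K : ℝ)⁻¹ * k) := by
      rw [hadef, ← NNReal.rpow_natCast ((2⁻¹ : ℝ≥0) ^ ((K : ℝ)⁻¹)) k,
        ← NNReal.rpow_mul]
    have hexp : (K : ℝ)⁻¹ * k ≤ (m : ℝ) + 1 := by
      rw [inv_mul_le_iff₀ (by exact_mod_cast hKpos)]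
      have : (k : ℝ) < K * (m + 1) := by
        have : k < K * (m + 1) := by
          rw [Nat.mul_succ, ← hkdecomp]
          exact Nat.add_lt_add_left (Nat.mod_lt _ hKpos) _
        exact_mod_cast this
      linarith
    have hmono : (2⁻¹ : ℝ≥0) ^ ((m : ℝ) + 1) ≤ (2⁻¹ : ℝ≥0) ^ ((K : ℝ)⁻¹ * k) :=
      NNReal.rpow_le_rpow_of_exponent_ge (by norm_num) (by norm_num) hexp
    have heq : (2⁻¹ : ℝ≥0) ^ ((m : ℝ) + 1) = (2⁻¹ : ℝ≥0) ^ (m + 1) := by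
      rw [← NNReal.rpow_natCast (2⁻¹ : ℝ≥0) (m + 1)]; push_cast; ring_nf
    have : (2⁻¹ : ℝ≥0) ^ m = 2 * (2⁻¹ : ℝ≥0) ^ (m + 1) := by
      rw [pow_succ]; rw [← mul_assoc, mul_comm (2 : ℝ≥0)]
      norm_num
      rw [mul_assoc, mul_one_div_cancel two_ne_zero, mul_one]
    rw [this, hak]
    exact mul_le_mul_right (heq ▸ hmono) 2
  calc lnorm (Γ^[k] s) ≤ b 0 * ((2⁻¹ : ℝ≥0) ^ m * lnorm s) := h1
    _ ≤ b 0 * (2 * a ^ k * lnorm s) := by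
        exact mul_le_mul_right (mul_le_mul_left hpow _) _
    _ ≤ (2 * b 0 + 2) * a ^ k * lnorm s := by
        have hb : b 0 * 2 ≤ 2 * b 0 + 2 := by rw [mul_comm]; exact le_self_add
        calc b 0 * (2 * a ^ k * lnorm s) = b 0 * 2 * (a ^ k * lnorm s) := by ring
          _ ≤ (2 * b 0 + 2) * (a ^ k * lnorm s) := mul_le_mul_left hb _
          _ = (2 * b 0 + 2) * a ^ k * lnorm s := by ring
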